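/- Let 𝕂 = ℝ or ℂ and let A be an n×n lower triangular matrix over 𝕂 whose diagonal entries satisfy 0 < |A_1| < |A_2| < … < |A_n|. Then A is invertible and there exists a constant λ > 0, depending only on A, such that for all indices i, j ∈ {1, …, n} and all integers l ≥ 1: |(A^l)_{ij}| ≤ λ |A_i|^l and |(A^{−l})_{ij}| ≤ λ |A_j|^{−l}. -/

import Mathlib

open Matrix

noncomputable def Pcol {𝕂 : Type*} [Field 𝕂] {n : ℕ} (A : Matrix (Fin n) (Fin n) 𝕂)
    (k : Fin n) : ℕ → 𝕂
  | i =>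
    if i = (k : ℕ) then 1
    else if i < (k : ℕ) then 0
    else if hn : i < n then
      (∑ m : Fin n, if h : (m : ℕ) < i then A ⟨i, hn⟩ m * Pcol A k m else 0) /
        (A k k - A ⟨i, hn⟩ ⟨i, hn⟩)
    else 0
termination_by i => i

/-- **Lemma 2 (Lemma `bounds`).** If `A` is an `n × n` lower triangular matrix over
`𝕂 = ℝ` or `ℂ` whose diagonal entries satisfy `0 < |A_1| < |A_2| < … < |A_n|`, then `A`
is invertible and there is `λ > 0` (depending only on `A`) such that
`|(A^l)_{ij}| ≤ λ |A_i|^l` and `|(A^{-l})_{ij}| ≤ λ |A_j|^{-l}` for all `i, j` and `l ≥ 1`. -/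
theorem stmt_4 {𝕂 : Type*} [RCLike 𝕂] {n : ℕ} (A : Matrix (Fin n) (Fin n) 𝕂)
    (hlow : ∀ i j : Fin n, i < j → A i j = 0)
    (hpos : ∀ i : Fin n, 0 < ‖A i i‖)
    (hmono : StrictMono fun i : Fin n => ‖A i i‖) :
    IsUnit A ∧
      ∃ lam : ℝ, 0 < lam ∧ ∀ (i j : Fin n) (l : ℕ), 1 ≤ l →
        ‖(A ^ l) i j‖ ≤ lam * ‖A i i‖ ^ l ∧
        ‖(A⁻¹ ^ l) i j‖ ≤ lam * (‖A j j‖ ^ l)⁻¹ := by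
  classical
  set d : Fin n → 𝕂 := fun i => A i i with hd
  have hdne : ∀ i : Fin n, d i ≠ 0 := fun i => norm_pos_iff.mp (hpos i)
  have hne : ∀ {i k : Fin n}, k < i → A k k - A i i ≠ 0 := by
    intro i k hk h
    have h1 : ‖A k k‖ < ‖A i i‖ := hmono hk
    rw [sub_eq_zero] at h
    rw [h] at h1
    exact lt_irrefl _ h1
  set P : Matrix (Fin n) (Fin n) 𝕂 := Matrix.of fun i k => Pcol A k (i : ℕ) with hP
  have hPdiag : ∀ k : Fin n, P k k = 1 := by
    intro k
    show Pcol A k (k : ℕ) = 1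
    rw [Pcol]; simp
  have hPlow : ∀ i k : Fin n, i < k → P i k = 0 := by
    intro i k hik
    show Pcol A k (i : ℕ) = 0
    rw [Pcol]
    rw [if_neg (by exact Nat.ne_of_lt hik), if_pos (by exact hik)]
  have hPrec : ∀ i k : Fin n, k < i →
      P i k * (A k k - A i i) =
        ∑ m ∈ Finset.univ.filter (fun m => m < i), A i m * P m k := by
    intro i k hki
    have h1 : (i : ℕ) ≠ (k : ℕ) := Nat.ne_of_gt hki
    have h2 : ¬ (i : ℕ) < (k : ℕ) := not_lt.mpr (le_of_lt hki)
    have hn : (i : ℕ) < n := i.isLt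
    show Pcol A k (i : ℕ) * (A k k - A i i) = _
    rw [Pcol, if_neg h1, if_neg h2, dif_pos hn]
    have he : (⟨(i : ℕ), hn⟩ : Fin n) = i := by ext; rfl
    rw [he]
    rw [div_mul_cancel₀ _ (hne hki)]
    rw [Finset.sum_filter]
    refine Finset.sum_congr rfl fun m _ => ?_
    by_cases hm : m < i
    · rw [dif_pos (by exact hm), if_pos hm]
      rfl
    · rw [dif_neg (by exact hm), if_neg hm]
  have hAP : A * P = P * Matrix.diagonal d := by
    ext i k
    rw [Matrix.mul_apply, Matrix.mul_diagonal]
    have hsplit : ∀ m : Fin n, A i m * P m k =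
        (if m = i then A i i * P i k else 0) + (if m < i then A i m * P m k else 0) := by
      intro m
      rcases lt_trichotomy m i with h | h | h
      · rw [if_neg (Fin.ne_of_lt h), if_pos h, zero_add]
      · subst h; rw [if_pos rfl, if_neg (lt_irrefl m), add_zero]
      · rw [hlow i m h, if_neg (Fin.ne_of_gt h), if_neg (not_lt.mpr (le_of_lt h)),
          zero_mul, zero_add]
    rw [Finset.sum_congr rfl fun m _ => hsplit m, Finset.sum_add_distrib,
      Finset.sum_ite_eq' Finset.univ i, if_pos (Finset.mem_univ i), ← Finset.sum_filter]
    rcases lt_trichotomy i k with h | h | h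
    · rw [hPlow i k h, mul_zero, zero_mul, zero_add]
      refine Finset.sum_eq_zero fun m hm => ?_
      rw [hPlow m k ((Finset.mem_filter.mp hm).2.trans h), mul_zero]
    · subst h
      have : ∑ m ∈ Finset.univ.filter (fun m => m < i), A i m * P m i = 0 := by
        refine Finset.sum_eq_zero fun m hm => ?_
        rw [hPlow m i (Finset.mem_filter.mp hm).2, mul_zero]
      rw [this, add_zero, mul_comm]
    · rw [← hPrec i k h]; ring
  have hPbt : P.BlockTriangular OrderDual.toDual := by
    intro i j hij
    exact hPlow i j hij
  have hPdet : P.det = 1 := by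
    rw [Matrix.det_of_lowerTriangular P hPbt]
    simp [hPdiag]
  have hPunit : IsUnit P.det := by rw [hPdet]; exact isUnit_one
  haveI : Invertible P := P.invertibleOfIsUnitDet hPunit
  have hPP : P * P⁻¹ = 1 := Matrix.mul_nonsing_inv P hPunit
  have hPP' : P⁻¹ * P = 1 := Matrix.nonsing_inv_mul P hPunit
  have cancel : ∀ X : Matrix (Fin n) (Fin n) 𝕂, P⁻¹ * (P * X) = X := by
    intro X; rw [← Matrix.mul_assoc, hPP', Matrix.one_mul]
  have hA : A = P * Matrix.diagonal d * P⁻¹ := by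
    calc A = A * (P * P⁻¹) := by rw [hPP, Matrix.mul_one]
    _ = (A * P) * P⁻¹ := by rw [Matrix.mul_assoc]
    _ = P * Matrix.diagonal d * P⁻¹ := by rw [hAP]
  have hAunit : IsUnit A := by
    rw [Matrix.isUnit_iff_isUnit_det]
    have hAbt : A.BlockTriangular OrderDual.toDual := fun i j hij => hlow i j hij
    rw [Matrix.det_of_lowerTriangular A hAbt]
    exact isUnit_iff_ne_zero.mpr (Finset.prod_ne_zero_iff.mpr fun i _ => hdne i)
  have key : ∀ (M B : Matrix (Fin n) (Fin n) 𝕂), M = P * B * P⁻¹ →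
      ∀ l : ℕ, M ^ l = P * B ^ l * P⁻¹ := by
    intro M B hM l
    induction l with
    | zero => simp [hPP]
    | succ l ih =>
      rw [pow_succ, pow_succ, ih, hM]
      simp only [Matrix.mul_assoc, cancel]
  set e : Fin n → 𝕂 := fun i => (A i i)⁻¹ with he
  have hAinv : A⁻¹ = P * Matrix.diagonal e * P⁻¹ := by
    refine Matrix.inv_eq_right_inv ?_
    rw [hA]
    calc P * Matrix.diagonal d * P⁻¹ * (P * Matrix.diagonal e * P⁻¹)
        = P * (Matrix.diagonal d * Matrix.diagonal e) * P⁻¹ := by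
          simp only [Matrix.mul_assoc, cancel]
    _ = 1 := by
          have hde : Matrix.diagonal d * Matrix.diagonal e = 1 := by
            ext i j
            rw [Matrix.diagonal_mul_diagonal]
            rcases eq_or_ne i j with rfl | hij
            · simp [Matrix.diagonal_apply, Matrix.one_apply, mul_inv_cancel₀ (hdne i)]
              exact mul_inv_cancel₀ (hdne i)
            · simp [Matrix.diagonal_apply, Matrix.one_apply, hij]
          rw [hde, Matrix.mul_one, hPP]
  have hApow := key A (Matrix.diagonal d) hA
  have hAipow := key A⁻¹ (Matrix.diagonal e) hAinv
  have hentry : ∀ (v : Fin n → 𝕂) (i j : Fin n),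
      (P * Matrix.diagonal v * P⁻¹) i j = ∑ k, P i k * v k * P⁻¹ k j := by
    intro v i j
    rw [Matrix.mul_apply]
    exact Finset.sum_congr rfl fun k _ => by rw [Matrix.mul_diagonal]
  have hPinvbt : P⁻¹.BlockTriangular OrderDual.toDual :=
    Matrix.blockTriangular_inv_of_blockTriangular hPbt
  have hPinvlow : ∀ i k : Fin n, i < k → P⁻¹ i k = 0 := fun i k hik => hPinvbt hik
  refine ⟨hAunit, 1 + ∑ i, ∑ j, ∑ k, ‖P i k‖ * ‖P⁻¹ k j‖, ?_, ?_⟩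
  · have : (0:ℝ) ≤ ∑ i, ∑ j, ∑ k, ‖P i k‖ * ‖P⁻¹ k j‖ := by positivity
    linarith
  intro i j l _
  set lam : ℝ := 1 + ∑ i, ∑ j, ∑ k, ‖P i k‖ * ‖P⁻¹ k j‖ with hlam
  have hSle : (∑ k, ‖P i k‖ * ‖P⁻¹ k j‖) ≤ lam := by
    have h1 : (∑ k, ‖P i k‖ * ‖P⁻¹ k j‖) ≤ ∑ j', ∑ k, ‖P i k‖ * ‖P⁻¹ k j'‖ :=
      Finset.single_le_sum (f := fun j' => ∑ k, ‖P i k‖ * ‖P⁻¹ k j'‖)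
        (fun j' _ => Finset.sum_nonneg fun k _ => by positivity) (Finset.mem_univ j)
    have h2 : (∑ j', ∑ k, ‖P i k‖ * ‖P⁻¹ k j'‖) ≤ ∑ i', ∑ j', ∑ k, ‖P i' k‖ * ‖P⁻¹ k j'‖ :=
      Finset.single_le_sum (f := fun i' => ∑ j', ∑ k, ‖P i' k‖ * ‖P⁻¹ k j'‖)
        (fun i' _ => Finset.sum_nonneg fun j' _ => Finset.sum_nonneg fun k _ => by positivity)
        (Finset.mem_univ i)
    rw [hlam]; linarith
  constructor
  · rw [hApow l, Matrix.diagonal_pow, hentry]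
    calc ‖∑ k, P i k * (d ^ l) k * P⁻¹ k j‖
        ≤ ∑ k, ‖P i k * (d ^ l) k * P⁻¹ k j‖ := norm_sum_le _ _
    _ ≤ ∑ k, (‖P i k‖ * ‖P⁻¹ k j‖) * ‖A i i‖ ^ l := by
        refine Finset.sum_le_sum fun k _ => ?_
        by_cases hk : k ≤ i
        · have hdk : ‖d k‖ ^ l ≤ ‖A i i‖ ^ l :=
            pow_le_pow_left₀ (norm_nonneg _) (hmono.monotone hk) l
          have : ‖P i k * (d ^ l) k * P⁻¹ k j‖
              = (‖P i k‖ * ‖P⁻¹ k j‖) * ‖d k‖ ^ l := by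
            rw [norm_mul, norm_mul, Pi.pow_apply, norm_pow]; ring
          rw [this]
          exact mul_le_mul_of_nonneg_left hdk (by positivity)
        · rw [hPlow i k (not_le.mp hk), zero_mul, zero_mul, norm_zero]
          positivity
    _ = (∑ k, ‖P i k‖ * ‖P⁻¹ k j‖) * ‖A i i‖ ^ l := by rw [Finset.sum_mul]
    _ ≤ lam * ‖A i i‖ ^ l := mul_le_mul_of_nonneg_right hSle (by positivity)
  · rw [hAipow l, Matrix.diagonal_pow, hentry]
    calc ‖∑ k, P i k * (e ^ l) k * P⁻¹ k j‖
        ≤ ∑ k, ‖P i k * (e ^ l) k * P⁻¹ k j‖ := norm_sum_le _ _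
    _ ≤ ∑ k, (‖P i k‖ * ‖P⁻¹ k j‖) * (‖A j j‖ ^ l)⁻¹ := by
        refine Finset.sum_le_sum fun k _ => ?_
        by_cases hk : j ≤ k
        · have hjk : ‖A j j‖ ^ l ≤ ‖A k k‖ ^ l :=
            pow_le_pow_left₀ (norm_nonneg _) (hmono.monotone hk) l
          have hdk : (‖A k k‖ ^ l)⁻¹ ≤ (‖A j j‖ ^ l)⁻¹ :=
            inv_anti₀ (pow_pos (hpos j) l) hjk
          have : ‖P i k * (e ^ l) k * P⁻¹ k j‖
              = (‖P i k‖ * ‖P⁻¹ k j‖) * (‖A k k‖ ^ l)⁻¹ := by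
            rw [norm_mul, norm_mul, Pi.pow_apply, norm_pow, he]
            simp only [norm_inv]
            rw [inv_pow]
            ring
          rw [this]
          exact mul_le_mul_of_nonneg_left hdk (by positivity)
        · rw [hPinvlow k j (not_le.mp hk), mul_zero, norm_zero]
          positivity
    _ = (∑ k, ‖P i k‖ * ‖P⁻¹ k j‖) * (‖A j j‖ ^ l)⁻¹ := by rw [Finset.sum_mul]
    _ ≤ lam * (‖A j j‖ ^ l)⁻¹ := mul_le_mul_of_nonneg_right hSle (by positivity)
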